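/- arXiv:2605.15348 — 2 statements merged into one kernel-verified Lean document; each statement's English description precedes it below -/
import Mathlib

section
/- Corollary (finite form of the non-overlapping BLO threshold bound): fix n, m ≥ 1 natural numbers and p ∈ [0, 1/2). Let 𝓑 be a finite family of pairwise disjoint finite subsets of Fin n, each of cardinality at least m. Then, for the random subset E of Fin n in which each element is included independently with probability p, the probability of the event { ∃ nonempty sub-family S ⊆ 𝓑 with 2·|E ∩ (⋃_{L∈S} L)| ≥ |⋃_{L∈S} L| } is at most |𝓑| · exp(−2m(1/2 − p)²), and moreover |𝓑| ≤ n/m. -/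
open MeasureTheory

/-- The product over `Fin n` of the Bernoulli measure on `Bool` assigning
probability `p` to `true` (for `0 ≤ p ≤ 1`, where the clamping by `1` is inert). -/
noncomputable def productBernoulli (n : ℕ) (p : ℝ) : Measure (Fin n → Bool) :=
  Measure.pi fun _ =>
    (PMF.bernoulli (min (Real.toNNReal p) 1) (min_le_right _ _)).toMeasure

/-- The random error subset of `Fin n` determined by a sample `ω : Fin n → Bool`. -/
def errSet {n : ℕ} (ω : Fin n → Bool) : Finset (Fin n) :=
  Finset.univ.filter fun i => ω i = true

/-- Finite form of the non-overlapping BLO threshold bound: if `𝓑` is a pairwise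
disjoint family of subsets of `Fin n`, each of cardinality at least `m`, then the
probability that some nonempty subfamily's union has at least half of its support
in error is at most `|𝓑| · exp(−2m(1/2 − p)²)`, and moreover `|𝓑| ≤ n/m`. -/
lemma pb_singleton (n : ℕ) (p : ℝ) (hp0 : 0 ≤ p) (hp1 : p ≤ 1) (ω : Fin n → Bool) :
    productBernoulli n p {ω} = ENNReal.ofReal (∏ i, (if ω i then p else 1 - p)) := by
  have hmin : min (Real.toNNReal p) 1 = Real.toNNReal p :=
    min_eq_left (by simpa using Real.toNNReal_le_toNNReal hp1)
  rw [← Set.univ_pi_singleton ω, productBernoulli, Measure.pi_pi]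
  rw [ENNReal.ofReal_prod_of_nonneg (fun i _ => by split <;> [exact hp0; linarith])]
  refine Finset.prod_congr rfl fun i _ => ?_
  rw [PMF.toMeasure_apply_singleton _ _ (measurableSet_singleton _), PMF.bernoulli_apply, hmin]
  cases h : ω i <;> simp [h]
  · rw [← ENNReal.ofReal_one]
    change ENNReal.ofReal 1 - ENNReal.ofReal p = _
    rw [← ENNReal.ofReal_sub _ hp0]
  · rfl

lemma pb_finset (n : ℕ) (p : ℝ) (S : Finset (Fin n → Bool)) :
    productBernoulli n p ↑S = ∑ ω ∈ S, productBernoulli n p {ω} := by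
  have h : (↑S : Set (Fin n → Bool)) = ⋃ ω ∈ S, {ω} := by ext x; simp
  rw [h, measure_biUnion_finset ?_ (fun ω _ => measurableSet_singleton ω)]
  intro a _ b _ hab
  simp [Set.disjoint_left, hab]

lemma le_of_sq_le_sq' {a b : ℝ} (ha : 0 ≤ a) (hb : 0 ≤ b) (h : a^2 ≤ b^2) : a ≤ b := by
  nlinarith

lemma point_bound {p : ℝ} (hp0 : 0 ≤ p) (hp : p < 1/2) {N k : ℕ} (hk : k ≤ N)
    (h2 : N ≤ 2 * k) :
    p ^ k * (1 - p) ^ (N - k) ≤ Real.sqrt (p * (1 - p)) ^ N := by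
  have hq0 : (0:ℝ) ≤ 1 - p := by linarith
  have hpq : p ≤ 1 - p := by linarith
  set B := Real.sqrt (p * (1 - p)) with hB
  refine le_of_sq_le_sq' (by positivity) (by positivity) ?_
  have hBsq : (B ^ N) ^ 2 = (p * (1 - p)) ^ N := by
    rw [← pow_mul, mul_comm N 2, pow_mul, Real.sq_sqrt (by positivity)]
  rw [hBsq, mul_pow, ← pow_mul, ← pow_mul, mul_pow]
  have hd : k * 2 = N + (2 * k - N) := by omega
  calc p ^ (k * 2) * (1 - p) ^ ((N - k) * 2)
      = p ^ N * (p ^ (2*k - N) * (1 - p) ^ ((N - k) * 2)) := by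
        rw [hd, pow_add, mul_assoc]
    _ ≤ p ^ N * ((1-p) ^ (2*k - N) * (1 - p) ^ ((N - k) * 2)) := by
        gcongr
    _ = p ^ N * (1 - p) ^ N := by rw [← pow_add]; rw [show (2*k-N) + (N-k)*2 = N by omega]

lemma sum_bound {n : ℕ} {p : ℝ} (hp0 : 0 ≤ p) (hp : p < 1/2) (m : ℕ) (L : Finset (Fin n))
    (hmL : m ≤ L.card) :
    ∑ ω ∈ Finset.univ.filter (fun ω : Fin n → Bool => L.card ≤ 2 * (errSet ω ∩ L).card),
      ∏ i, (if ω i then p else 1 - p)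
      ≤ Real.exp (-2 * m * (1 / 2 - p) ^ 2) := by
  have hq0 : (0:ℝ) ≤ 1 - p := by linarith
  set w : Bool → ℝ := fun b => if b then p else 1 - p with hw
  have hw0 : ∀ b, 0 ≤ w b := by intro b; cases b <;> simp [hw, hp0, hq0]
  set N := L.card with hN
  set T := Finset.univ.filter
    (fun ω : Fin n → Bool => L.card ≤ 2 * (errSet ω ∩ L).card) with hT
  set B := Real.sqrt (p * (1 - p)) with hB
  have hB0 : 0 ≤ B := Real.sqrt_nonneg _
  -- step 1: pointwise bound on the L-part of the product
  have key : ∀ ω ∈ T,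
      ∏ i, w (ω i) ≤ B ^ N * ∏ i ∈ Lᶜ, w (ω i) := by
    intro ω hω
    rw [hT, Finset.mem_filter] at hω
    have hsplit : ∏ i, w (ω i) = (∏ i ∈ L, w (ω i)) * ∏ i ∈ Lᶜ, w (ω i) :=
      (Finset.prod_mul_prod_compl L _).symm
    rw [hsplit]
    refine mul_le_mul_of_nonneg_right ?_ (Finset.prod_nonneg fun i _ => hw0 _)
    have hinter : errSet ω ∩ L = L.filter (fun i => ω i = true) := by
      ext i; simp [errSet, and_comm]
    have hLprod : ∏ i ∈ L, w (ω i)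
        = p ^ (errSet ω ∩ L).card * (1 - p) ^ (N - (errSet ω ∩ L).card) := by
      rw [← Finset.prod_filter_mul_prod_filter_not L (fun i => ω i = true)]
      have h1 : ∏ i ∈ L.filter (fun i => ω i = true), w (ω i)
          = p ^ (errSet ω ∩ L).card := by
        rw [hinter, Finset.prod_congr rfl (fun i hi => ?_), Finset.prod_const]
        rw [Finset.mem_filter] at hi; simp [hw, hi.2]
      have hsum := Finset.card_filter_add_card_filter_not
          (s := L) (fun i => ω i = true)
      have h2 : ∏ i ∈ L.filter (fun i => ¬ ω i = true), w (ω i)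
          = (1 - p) ^ (N - (errSet ω ∩ L).card) := by
        rw [Finset.prod_congr rfl (fun i hi => ?_), Finset.prod_const]
        · congr 1
          rw [hinter]
          omega
        · rw [Finset.mem_filter] at hi; simp [hw, hi.2]
      rw [h1, h2]
    rw [hLprod]
    exact point_bound hp0 hp (by
      rw [hinter]; exact Finset.card_filter_le _ _) hω.2
  -- step 2: sum the bound
  have step2 : ∑ ω ∈ T,
      ∏ i, w (ω i) ≤ B ^ N * ∑ ω : Fin n → Bool, ∏ i ∈ Lᶜ, w (ω i) := by
    rw [Finset.mul_sum]
    calc ∑ ω ∈ T, ∏ i, w (ω i)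
        ≤ ∑ ω ∈ T, B ^ N * ∏ i ∈ Lᶜ, w (ω i) := Finset.sum_le_sum key
      _ ≤ _ := Finset.sum_le_sum_of_subset_of_nonneg
          (hT ▸ Finset.filter_subset _ _) (fun ω _ _ => by positivity)
  -- step 3: compute the full sum
  have step3 : ∑ ω : Fin n → Bool, ∏ i ∈ Lᶜ, w (ω i) = 2 ^ N := by
    set g : Fin n → Bool → ℝ := fun i b => if i ∈ L then 1 else w b with hg
    have h0 : ∀ ω : Fin n → Bool, ∏ i ∈ Lᶜ, w (ω i) = ∏ i, g i (ω i) := by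
      intro ω
      rw [← Finset.prod_mul_prod_compl L (fun i => g i (ω i))]
      rw [Finset.prod_congr rfl (fun i hi => if_pos hi), Finset.prod_const_one, one_mul]
      exact Finset.prod_congr rfl fun i hi =>
        (if_neg (by simpa [Finset.mem_compl] using hi)).symm
    simp_rw [h0]
    rw [← Fintype.piFinset_univ, ← Finset.prod_univ_sum]
    have h1 : ∀ i : Fin n, (∑ b : Bool, g i b) = if i ∈ L then 2 else 1 := by
      intro i; by_cases hi : i ∈ L <;> simp [hg, hi, hw] <;> ring
    simp_rw [h1]
    rw [Finset.prod_ite_mem, Finset.univ_inter, Finset.prod_const]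
  rw [step3] at step2
  refine step2.trans ?_
  -- step 4: (2B)^N ≤ exp
  set c := (1/2 - p)^2 with hc
  have hc0 : 0 ≤ c := sq_nonneg _
  have h2B : 2 * B ≤ Real.exp (-2 * c) := by
    refine le_of_sq_le_sq' (by positivity) (Real.exp_nonneg _) ?_
    have : (2 * B)^2 = 4 * (p * (1 - p)) := by
      rw [mul_pow, Real.sq_sqrt (by nlinarith)]; ring
    rw [this, ← Real.exp_nat_mul]
    have h1 := Real.add_one_le_exp ((2:ℕ) * (-2 * c))
    push_cast at h1 ⊢
    nlinarith [h1, hc]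
  calc B ^ N * 2 ^ N = (2 * B) ^ N := by rw [mul_pow]; ring
    _ ≤ Real.exp (-2 * c) ^ N := pow_le_pow_left₀ (by positivity) h2B N
    _ = Real.exp (N * (-2 * c)) := by rw [← Real.exp_nat_mul]
    _ ≤ Real.exp (-2 * m * c) := by
        apply Real.exp_le_exp.mpr
        have : (m : ℝ) ≤ N := by exact_mod_cast hmL
        nlinarith

/-- Finite form -/
theorem nonoverlapping_BLO_union_bound (n m : ℕ) (hn : 1 ≤ n) (hm : 1 ≤ m)
    (p : ℝ) (hp0 : 0 ≤ p) (hp : p < 1 / 2)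
    (𝓑 : Finset (Finset (Fin n)))
    (hdisj : (𝓑 : Set (Finset (Fin n))).Pairwise fun A B => Disjoint A B)
    (hcard : ∀ L ∈ 𝓑, m ≤ L.card) :
    productBernoulli n p
        {ω | ∃ S ⊆ 𝓑, S.Nonempty ∧
          (S.biUnion id).card ≤ 2 * (errSet ω ∩ S.biUnion id).card}
      ≤ ENNReal.ofReal ((𝓑.card : ℝ) * Real.exp (-2 * m * (1 / 2 - p) ^ 2)) ∧
    (𝓑.card : ℝ) ≤ (n : ℝ) / (m : ℝ) := by
  have hp1 : p ≤ 1 := by linarith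
  constructor
  · -- union bound reduction
    have hsub : {ω : Fin n → Bool | ∃ S ⊆ 𝓑, S.Nonempty ∧
          (S.biUnion id).card ≤ 2 * (errSet ω ∩ S.biUnion id).card}
        ⊆ ⋃ L ∈ 𝓑, {ω | L.card ≤ 2 * (errSet ω ∩ L).card} := by
      intro ω hω
      obtain ⟨S, hS𝓑, hSne, hSbound⟩ := hω
      have hdisjS : ∀ A ∈ S, ∀ B ∈ S, A ≠ B → Disjoint (id A) (id B) :=
        fun A hA B hB hAB => hdisj (hS𝓑 hA) (hS𝓑 hB) hAB
      have hU : (S.biUnion id).card = ∑ L ∈ S, L.card := Finset.card_biUnion hdisjS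
      have hE : errSet ω ∩ S.biUnion id = S.biUnion (fun L => errSet ω ∩ L) := by
        ext i; simp [Finset.mem_biUnion]; tauto
      have hE2 : (errSet ω ∩ S.biUnion id).card = ∑ L ∈ S, (errSet ω ∩ L).card := by
        rw [hE]
        exact Finset.card_biUnion fun A hA B hB hAB =>
          (Finset.disjoint_left.mpr fun x hx hx' => (Finset.disjoint_left.mp
            (hdisjS A hA B hB hAB)) (Finset.mem_of_mem_inter_right hx)
            (Finset.mem_of_mem_inter_right hx'))
      by_contra hcon
      simp only [Set.mem_iUnion, Set.mem_setOf_eq, not_exists] at hcon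
      have hlt : ∀ L ∈ S, 2 * (errSet ω ∩ L).card < L.card := by
        intro L hL
        have := hcon L (hS𝓑 hL)
        omega
      have : ∑ L ∈ S, 2 * (errSet ω ∩ L).card < ∑ L ∈ S, L.card :=
        Finset.sum_lt_sum_of_nonempty hSne hlt
      rw [hU, hE2, Finset.mul_sum] at hSbound
      omega
    refine le_trans (measure_mono hsub) ?_
    refine le_trans (measure_biUnion_finset_le 𝓑 _) ?_
    have hL : ∀ L ∈ 𝓑, productBernoulli n p {ω | L.card ≤ 2 * (errSet ω ∩ L).card}
        ≤ ENNReal.ofReal (Real.exp (-2 * m * (1 / 2 - p) ^ 2)) := by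
      intro L hL
      have hset : {ω : Fin n → Bool | L.card ≤ 2 * (errSet ω ∩ L).card}
          = ↑(Finset.univ.filter
              (fun ω : Fin n → Bool => L.card ≤ 2 * (errSet ω ∩ L).card)) := by
        ext ω; simp
      rw [hset, pb_finset]
      have := sum_bound hp0 hp m L (hcard L hL)
      calc ∑ ω ∈ Finset.univ.filter
            (fun ω : Fin n → Bool => L.card ≤ 2 * (errSet ω ∩ L).card),
            productBernoulli n p {ω}
          = ENNReal.ofReal (∑ ω ∈ Finset.univ.filter
              (fun ω : Fin n → Bool => L.card ≤ 2 * (errSet ω ∩ L).card),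
              ∏ i, (if ω i then p else 1 - p)) := by
            rw [ENNReal.ofReal_sum_of_nonneg (fun ω _ => Finset.prod_nonneg
              (fun i _ => by split <;> linarith))]
            exact Finset.sum_congr rfl fun ω _ => pb_singleton n p hp0 hp1 ω
        _ ≤ ENNReal.ofReal (Real.exp (-2 * m * (1 / 2 - p) ^ 2)) :=
            ENNReal.ofReal_le_ofReal this
    refine le_trans (Finset.sum_le_sum hL) ?_
    rw [Finset.sum_const, nsmul_eq_mul, ENNReal.ofReal_mul (by positivity)]
    gcongr
    simp
  · -- cardinality bound
    have hm' : (0:ℝ) < m := by exact_mod_cast hm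
    rw [le_div_iff₀ hm']
    have h1 : 𝓑.card * m ≤ ∑ L ∈ 𝓑, L.card := by
      calc 𝓑.card * m = ∑ _L ∈ 𝓑, m := by rw [Finset.sum_const, smul_eq_mul]
        _ ≤ _ := Finset.sum_le_sum hcard
    have h2 : ∑ L ∈ 𝓑, L.card = (𝓑.biUnion id).card :=
      (Finset.card_biUnion fun A hA B hB hAB => hdisj hA hB hAB).symm
    have h3 : (𝓑.biUnion id).card ≤ n := by
      simpa using Finset.card_le_univ (𝓑.biUnion id)
    exact_mod_cast (by omega : 𝓑.card * m ≤ n)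
end

section
/- Hybrid extension of the threshold bound, asymptotic form: let K > 0, 0 < α ≤ 1 be real constants and p ∈ [0, 1/2). For each n, let 𝓓ₙ be a finite family of pairwise disjoint finite subsets of Fin n and 𝓞ₙ a finite family of finite subsets of Fin n, with every member of 𝓓ₙ disjoint from every member of 𝓞ₙ, every member of 𝓓ₙ ∪ 𝓞ₙ of cardinality at least K·n^α, and (log(1 + |𝓞ₙ|))/n^α → 0 as n → ∞. Then there exists c > 0 such that for all sufficiently large n, the probability (under the random subset E of Fin n in which each element is included independently with probability p) of the event { ∃ S ⊆ 𝓓ₙ and O ∈ 𝓞ₙ ∪ {∅}, not both S = ∅ and O = ∅, such that 2·|E ∩ ((⋃_{L∈S} L) ∪ O)| ≥ |(⋃_{L∈S} L) ∪ O| } is at most exp(−c·n^α). -/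
open MeasureTheory

lemma bern_true (p : ℝ) (hp0 : 0 ≤ p) (hp1 : p ≤ 1) :
    (PMF.bernoulli (min (Real.toNNReal p) 1) (min_le_right _ _)).toMeasure {true}
      = ENNReal.ofReal p := by
  rw [PMF.toMeasure_apply_singleton _ _ (measurableSet_singleton _), PMF.bernoulli_apply]
  simp only [cond_true, min_eq_left (Real.toNNReal_le_one.2 hp1)]
  rfl

lemma bern_false (p : ℝ) (hp0 : 0 ≤ p) (hp1 : p ≤ 1) :
    (PMF.bernoulli (min (Real.toNNReal p) 1) (min_le_right _ _)).toMeasure {false}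
      = ENNReal.ofReal (1 - p) := by
  rw [PMF.toMeasure_apply_singleton _ _ (measurableSet_singleton _), PMF.bernoulli_apply]
  simp only [cond_false, min_eq_left (Real.toNNReal_le_one.2 hp1)]
  rw [ENNReal.ofReal_sub _ hp0, ENNReal.ofReal_one]
  simp [ENNReal.ofReal]

lemma cylinder_measure {n : ℕ} (p : ℝ) (hp0 : 0 ≤ p) (hp1 : p ≤ 1)
    (T A : Finset (Fin n)) (hA : A ⊆ T) :
    productBernoulli n p {ω | errSet ω ∩ T = A}
      = ENNReal.ofReal p ^ A.card * ENNReal.ofReal (1 - p) ^ (T.card - A.card) := by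
  classical
  have hset : {ω : Fin n → Bool | errSet ω ∩ T = A}
      = Set.univ.pi (fun i => if i ∈ T then {decide (i ∈ A)} else (Set.univ : Set Bool)) := by
    ext ω
    simp only [Set.mem_setOf_eq, Set.mem_pi, Set.mem_univ, forall_true_left]
    constructor
    · intro h i
      by_cases hiT : i ∈ T
      · simp only [hiT, if_true, Set.mem_singleton_iff]
        by_cases hiA : i ∈ A
        · have : i ∈ errSet ω ∩ T := h ▸ hiA
          simp only [errSet, Finset.mem_inter, Finset.mem_filter] at this
          simp [hiA, this.1.2]
        · have : i ∉ errSet ω ∩ T := h ▸ hiA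
          simp only [errSet, Finset.mem_inter, Finset.mem_filter, Finset.mem_univ,
            true_and, not_and] at this
          have := fun h' => this h' hiT
          cases hω : ω i with
          | false => simp [hiA]
          | true => exact absurd hω this
      · simp [hiT]
    · intro h
      ext i
      simp only [errSet, Finset.mem_inter, Finset.mem_filter, Finset.mem_univ, true_and]
      constructor
      · rintro ⟨hω, hiT⟩
        have := h i
        simp only [hiT, if_true, Set.mem_singleton_iff, hω] at this
        exact of_decide_eq_true this.symm
      · intro hiA
        have hiT := hA hiA
        have := h i
        simp only [hiT, if_true, Set.mem_singleton_iff] at this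
        exact ⟨this.trans (decide_eq_true hiA), hiT⟩
  rw [hset, productBernoulli, Measure.pi_pi]
  have hprod : ∀ i : Fin n,
      (PMF.bernoulli (min (Real.toNNReal p) 1) (min_le_right _ _)).toMeasure
        (if i ∈ T then {decide (i ∈ A)} else (Set.univ : Set Bool))
      = if i ∈ T then (if i ∈ A then ENNReal.ofReal p else ENNReal.ofReal (1 - p)) else 1 := by
    intro i
    by_cases hiT : i ∈ T
    · by_cases hiA : i ∈ A
      · simp [hiT, hiA, bern_true p hp0 hp1]
      · simp [hiT, hiA, bern_false p hp0 hp1]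
    · simp only [hiT, if_false, measure_univ]
  simp only [hprod]
  rw [← Finset.prod_subset (Finset.subset_univ T) (by intro i _ hi; simp [hi])]
  have : ∀ i ∈ T, (if i ∈ T then (if i ∈ A then ENNReal.ofReal p else ENNReal.ofReal (1 - p)) else 1)
      = if i ∈ A then ENNReal.ofReal p else ENNReal.ofReal (1 - p) := by
    intro i hi; simp [hi]
  rw [Finset.prod_congr rfl this, ← Finset.union_sdiff_of_subset hA,
    Finset.prod_union (Finset.disjoint_sdiff)]
  rw [Finset.prod_congr rfl (fun i hi => if_pos (by exact hi)),
    Finset.prod_congr rfl (fun i (hi : i ∈ T \ A) => if_neg (Finset.mem_sdiff.1 hi).2)]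
  rw [Finset.prod_const, Finset.prod_const, Finset.card_sdiff_of_subset hA,
    Finset.card_union_of_disjoint Finset.disjoint_sdiff, Finset.card_sdiff_of_subset hA,
    Nat.add_sub_cancel' (Finset.card_le_card hA)]

lemma pow_split_bound (P Q S : ENNReal) (hP : P ≤ S) (hPQ : P * Q = S * S) (u v : ℕ) :
    P ^ (u + v) * Q ^ v ≤ S ^ (u + 2 * v) := by
  calc P ^ (u + v) * Q ^ v = P ^ u * (P * Q) ^ v := by rw [pow_add, mul_pow]; ring
    _ = P ^ u * (S * S) ^ v := by rw [hPQ]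
    _ ≤ S ^ u * (S * S) ^ v := by gcongr
    _ = S ^ (u + 2 * v) := by rw [← sq, ← pow_mul, ← pow_add]

lemma single_T_bound {n : ℕ} (p : ℝ) (hp0 : 0 ≤ p) (hp : p < 1 / 2) (T : Finset (Fin n)) :
    productBernoulli n p {ω | T.card ≤ 2 * (errSet ω ∩ T).card}
      ≤ ENNReal.ofReal ((2 * Real.sqrt (p * (1 - p))) ^ T.card) := by
  classical
  have hp1 : p ≤ 1 := hp.le.trans (by norm_num)
  set s : ℝ := Real.sqrt (p * (1 - p)) with hs
  have hs0 : 0 ≤ s := Real.sqrt_nonneg _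
  set S : ENNReal := ENNReal.ofReal s with hS
  have hPS : ENNReal.ofReal p ≤ S := by
    apply ENNReal.ofReal_le_ofReal
    rw [hs, Real.le_sqrt hp0 (by nlinarith)]
    nlinarith
  have hPQ : ENNReal.ofReal p * ENNReal.ofReal (1 - p) = S * S := by
    rw [hS, ← ENNReal.ofReal_mul hp0, ← ENNReal.ofReal_mul hs0, hs,
      Real.mul_self_sqrt (by nlinarith)]
  set 𝒜 : Finset (Finset (Fin n)) := T.powerset.filter (fun A => T.card ≤ 2 * A.card) with h𝒜
  have hsub : {ω : Fin n → Bool | T.card ≤ 2 * (errSet ω ∩ T).card}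
      ⊆ ⋃ A ∈ 𝒜, {ω | errSet ω ∩ T = A} := by
    intro ω hω
    simp only [Set.mem_setOf_eq] at hω
    simp only [Set.mem_iUnion]
    exact ⟨errSet ω ∩ T, Finset.mem_filter.2
      ⟨Finset.mem_powerset.2 Finset.inter_subset_right, hω⟩, rfl⟩
  calc productBernoulli n p {ω | T.card ≤ 2 * (errSet ω ∩ T).card}
      ≤ productBernoulli n p (⋃ A ∈ 𝒜, {ω | errSet ω ∩ T = A}) := measure_mono hsub
    _ ≤ ∑ A ∈ 𝒜, productBernoulli n p {ω | errSet ω ∩ T = A} :=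
        measure_biUnion_finset_le _ _
    _ ≤ ∑ A ∈ 𝒜, S ^ T.card := by
        apply Finset.sum_le_sum
        intro A hA
        simp only [h𝒜, Finset.mem_filter, Finset.mem_powerset] at hA
        obtain ⟨hAT, hAc⟩ := hA
        rw [cylinder_measure p hp0 hp1 T A hAT]
        have hc : A.card ≤ T.card := Finset.card_le_card hAT
        have := pow_split_bound (ENNReal.ofReal p) (ENNReal.ofReal (1 - p)) S hPS hPQ
          (2 * A.card - T.card) (T.card - A.card)
        have h1 : 2 * A.card - T.card + (T.card - A.card) = A.card := by omega
        have h2 : 2 * A.card - T.card + 2 * (T.card - A.card) = T.card := by omega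
        rwa [h1, h2] at this
    _ = (𝒜.card : ENNReal) * S ^ T.card := by
        rw [Finset.sum_const, nsmul_eq_mul]
    _ ≤ (2 ^ T.card : ENNReal) * S ^ T.card := by
        gcongr
        have : 𝒜.card ≤ T.powerset.card := Finset.card_filter_le _ _
        rw [Finset.card_powerset] at this
        calc (𝒜.card : ENNReal) ≤ ((2 ^ T.card : ℕ) : ENNReal) := by exact_mod_cast this
          _ = 2 ^ T.card := by push_cast; ring
    _ = ENNReal.ofReal ((2 * s) ^ T.card) := by
        rw [ENNReal.ofReal_pow (by positivity), ENNReal.ofReal_mul (by norm_num),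
          ← mul_pow, ENNReal.ofReal_ofNat]

lemma powerset_sum_pow {β : Type*} [DecidableEq β] (s : Finset β) (x : ℝ) :
    ∑ t ∈ s.powerset, x ^ t.card = (1 + x) ^ s.card := by
  have := Finset.prod_add (fun _ : β => x) (fun _ : β => 1) s
  simp only [Finset.prod_const, one_pow, mul_one] at this
  rw [add_comm x 1] at this
  exact this.symm

lemma card_lb {n : ℕ} (K c : ℝ) (𝓓n 𝓞n : Finset (Finset (Fin n)))
    (hdisj : ((𝓓n : Set (Finset (Fin n)))).Pairwise fun A B => Disjoint A B)
    (hDO : ∀ D ∈ 𝓓n, ∀ O ∈ 𝓞n, Disjoint D O)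
    (hcard : ∀ L ∈ 𝓓n ∪ 𝓞n, c ≤ (L.card : ℝ)) (hc : 0 ≤ c)
    (S : Finset (Finset (Fin n))) (O : Finset (Fin n))
    (hS : S ⊆ 𝓓n) (hO : O ∈ 𝓞n ∪ {∅}) :
    ((S.card : ℝ) + (if O = ∅ then 0 else 1)) * c ≤ ((S.biUnion id ∪ O).card : ℝ) := by
  classical
  have hOcase : O = ∅ ∨ O ∈ 𝓞n := by
    rcases Finset.mem_union.1 hO with h | h
    · exact Or.inr h
    · exact Or.inl (Finset.mem_singleton.1 h)
  have hdisjSO : Disjoint (S.biUnion id) O := by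
    rcases hOcase with rfl | hO'
    · exact Finset.disjoint_empty_right _
    · rw [Finset.disjoint_biUnion_left]
      exact fun D hD => hDO D (hS hD) O hO'
  rw [Finset.card_union_of_disjoint hdisjSO]
  have hbi : (S.biUnion id).card = ∑ L ∈ S, L.card := by
    apply Finset.card_biUnion
    intro x hx y hy hxy
    exact hdisj (hS hx) (hS hy) hxy
  have h1 : (S.card : ℝ) * c ≤ ((S.biUnion id).card : ℝ) := by
    rw [hbi]
    push_cast
    calc (S.card : ℝ) * c = ∑ _L ∈ S, c := by rw [Finset.sum_const, nsmul_eq_mul]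
      _ ≤ ∑ L ∈ S, (L.card : ℝ) := by
          apply Finset.sum_le_sum
          intro L hL
          exact hcard L (Finset.mem_union_left _ (hS hL))
  have h2 : (if O = ∅ then (0:ℝ) else 1) * c ≤ ((O.card : ℝ)) := by
    by_cases hOe : O = ∅
    · rw [if_pos hOe, zero_mul]
      positivity
    · rw [if_neg hOe, one_mul]
      rcases hOcase with h | hO'
      · exact absurd h hOe
      · exact hcard O (Finset.mem_union_right _ hO')
  push_cast
  nlinarith [h1, h2]

lemma union_bound {n : ℕ} (p c b : ℝ) (hp0 : 0 ≤ p) (hp : p < 1 / 2)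
    (hc : 0 ≤ c) (hb0 : 0 < b) (hb1 : b ≤ 1) (hrb : 2 * Real.sqrt (p * (1 - p)) ≤ b)
    (𝓓n 𝓞n : Finset (Finset (Fin n)))
    (hdisj : ((𝓓n : Set (Finset (Fin n)))).Pairwise fun A B => Disjoint A B)
    (hDO : ∀ D ∈ 𝓓n, ∀ O ∈ 𝓞n, Disjoint D O)
    (hcard : ∀ L ∈ 𝓓n ∪ 𝓞n, c ≤ (L.card : ℝ)) :
    productBernoulli n p
        {ω | ∃ S ⊆ 𝓓n, ∃ O ∈ 𝓞n ∪ {∅}, ¬(S = ∅ ∧ O = ∅) ∧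
          (S.biUnion id ∪ O).card ≤ 2 * (errSet ω ∩ (S.biUnion id ∪ O)).card}
      ≤ ENNReal.ofReal (((1 + b ^ c) ^ 𝓓n.card - 1)
          + (1 + b ^ c) ^ 𝓓n.card * (𝓞n.card * b ^ c)) := by
  classical
  set x : ℝ := b ^ c with hxdef
  have hx0 : 0 ≤ x := le_of_lt (Real.rpow_pos_of_pos hb0 c)
  set idx : Finset (Finset (Finset (Fin n)) × Finset (Fin n)) :=
    (𝓓n.powerset ×ˢ (𝓞n ∪ {∅})).filter (fun z => ¬(z.1 = ∅ ∧ z.2 = ∅)) with hidx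
  set T : Finset (Finset (Fin n)) × Finset (Fin n) → Finset (Fin n) :=
    fun z => z.1.biUnion id ∪ z.2 with hT
  -- union bound
  have hsub : {ω : Fin n → Bool | ∃ S ⊆ 𝓓n, ∃ O ∈ 𝓞n ∪ {∅}, ¬(S = ∅ ∧ O = ∅) ∧
        (S.biUnion id ∪ O).card ≤ 2 * (errSet ω ∩ (S.biUnion id ∪ O)).card}
      ⊆ ⋃ z ∈ idx, {ω | (T z).card ≤ 2 * (errSet ω ∩ T z).card} := by
    rintro ω ⟨S, hS, O, hO, hne, hineq⟩
    simp only [Set.mem_iUnion]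
    refine ⟨(S, O), ?_, hineq⟩
    exact Finset.mem_filter.2 ⟨Finset.mem_product.2 ⟨Finset.mem_powerset.2 hS, hO⟩, hne⟩
  -- per-term real bound
  have hterm : ∀ z ∈ idx, productBernoulli n p {ω | (T z).card ≤ 2 * (errSet ω ∩ T z).card}
      ≤ ENNReal.ofReal (x ^ z.1.card * (if z.2 = ∅ then 1 else x)) := by
    intro z hz
    simp only [hidx, Finset.mem_filter, Finset.mem_product, Finset.mem_powerset] at hz
    obtain ⟨⟨hS, hO⟩, -⟩ := hz
    refine (single_T_bound p hp0 hp (T z)).trans (ENNReal.ofReal_le_ofReal ?_)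
    have hr0 : 0 ≤ 2 * Real.sqrt (p * (1 - p)) := by positivity
    set e : ℕ := if z.2 = ∅ then 0 else 1 with he
    have he' : ((e : ℕ) : ℝ) = if z.2 = ∅ then (0:ℝ) else 1 := by
      rcases em (z.2 = ∅) with h | h <;> simp [he, h]
    have hclb : ((z.1.card : ℝ) + e) * c ≤ ((T z).card : ℝ) := by
      rw [he']
      exact card_lb (0:ℝ) c 𝓓n 𝓞n hdisj hDO hcard hc z.1 z.2 hS hO
    calc (2 * Real.sqrt (p * (1 - p))) ^ (T z).card ≤ b ^ (T z).card :=
          pow_le_pow_left₀ hr0 hrb _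
      _ = b ^ (((T z).card : ℝ)) := (Real.rpow_natCast b _).symm
      _ ≤ b ^ (((z.1.card : ℝ) + e) * c) := Real.rpow_le_rpow_of_exponent_ge hb0 hb1 hclb
      _ = (b ^ c) ^ ((z.1.card + e : ℕ) : ℝ) := by
          rw [mul_comm, Real.rpow_mul hb0.le]
          congr 1
          push_cast
          ring
      _ = x ^ (z.1.card + e) := by rw [Real.rpow_natCast]
      _ = x ^ z.1.card * (if z.2 = ∅ then 1 else x) := by
          rw [pow_add]
          rcases em (z.2 = ∅) with h | h <;> simp [he, h]
  -- sum the real bounds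
  have hmeas : productBernoulli n p
        {ω : Fin n → Bool | ∃ S ⊆ 𝓓n, ∃ O ∈ 𝓞n ∪ {∅}, ¬(S = ∅ ∧ O = ∅) ∧
          (S.biUnion id ∪ O).card ≤ 2 * (errSet ω ∩ (S.biUnion id ∪ O)).card}
      ≤ ENNReal.ofReal (∑ z ∈ idx, x ^ z.1.card * (if z.2 = ∅ then 1 else x)) := by
    calc _ ≤ productBernoulli n p (⋃ z ∈ idx, {ω | (T z).card ≤ 2 * (errSet ω ∩ T z).card}) :=
          measure_mono hsub
      _ ≤ ∑ z ∈ idx, productBernoulli n p {ω | (T z).card ≤ 2 * (errSet ω ∩ T z).card} :=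
          measure_biUnion_finset_le _ _
      _ ≤ ∑ z ∈ idx, ENNReal.ofReal (x ^ z.1.card * (if z.2 = ∅ then 1 else x)) :=
          Finset.sum_le_sum hterm
      _ = ENNReal.ofReal (∑ z ∈ idx, x ^ z.1.card * (if z.2 = ∅ then 1 else x)) := by
          rw [ENNReal.ofReal_sum_of_nonneg]
          intro z hz
          rcases em (z.2 = ∅) with h | h <;> simp [h] <;> positivity
  refine hmeas.trans (ENNReal.ofReal_le_ofReal ?_)
  -- split the sum
  rw [← Finset.sum_filter_add_sum_filter_not idx (fun z => z.2 = ∅)]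
  have hA : ∑ z ∈ idx.filter (fun z => z.2 = ∅), x ^ z.1.card * (if z.2 = ∅ then 1 else x)
      ≤ (1 + x) ^ 𝓓n.card - 1 := by
    have hsubA : idx.filter (fun z => z.2 = ∅) ⊆ (𝓓n.powerset.erase ∅) ×ˢ {(∅ : Finset (Fin n))} := by
      intro z hz
      simp only [Finset.mem_filter, hidx, Finset.mem_product, Finset.mem_powerset] at hz
      obtain ⟨⟨⟨hS, hO⟩, hne⟩, h2⟩ := hz
      refine Finset.mem_product.2 ⟨Finset.mem_erase.2 ⟨?_, Finset.mem_powerset.2 hS⟩,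
        Finset.mem_singleton.2 h2⟩
      intro h1
      exact hne ⟨h1, h2⟩
    calc ∑ z ∈ idx.filter (fun z => z.2 = ∅), x ^ z.1.card * (if z.2 = ∅ then 1 else x)
        ≤ ∑ z ∈ (𝓓n.powerset.erase ∅) ×ˢ {(∅ : Finset (Fin n))},
            x ^ z.1.card * (if z.2 = ∅ then 1 else x) := by
          apply Finset.sum_le_sum_of_subset_of_nonneg hsubA
          intro z _ _
          rcases em (z.2 = ∅) with h | h <;> simp [h] <;> positivity
      _ = ∑ S ∈ 𝓓n.powerset.erase ∅, x ^ S.card := by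
          rw [Finset.sum_product]
          simp
      _ = (∑ S ∈ 𝓓n.powerset, x ^ S.card) - x ^ (∅ : Finset (Fin n)).card :=
          Finset.sum_erase_eq_sub (Finset.mem_powerset.2 (Finset.empty_subset _))
      _ = (1 + x) ^ 𝓓n.card - 1 := by rw [powerset_sum_pow]; simp
  have hB : ∑ z ∈ idx.filter (fun z => ¬z.2 = ∅), x ^ z.1.card * (if z.2 = ∅ then 1 else x)
      ≤ (1 + x) ^ 𝓓n.card * (𝓞n.card * x) := by
    have hsubB : idx.filter (fun z => ¬z.2 = ∅) ⊆ 𝓓n.powerset ×ˢ 𝓞n := by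
      intro z hz
      simp only [Finset.mem_filter, hidx, Finset.mem_product, Finset.mem_powerset] at hz
      obtain ⟨⟨⟨hS, hO⟩, -⟩, h2⟩ := hz
      refine Finset.mem_product.2 ⟨Finset.mem_powerset.2 hS, ?_⟩
      rcases Finset.mem_union.1 hO with h | h
      · exact h
      · exact absurd (Finset.mem_singleton.1 h) h2
    calc ∑ z ∈ idx.filter (fun z => ¬z.2 = ∅), x ^ z.1.card * (if z.2 = ∅ then 1 else x)
        = ∑ z ∈ idx.filter (fun z => ¬z.2 = ∅), x ^ z.1.card * x := by
          apply Finset.sum_congr rfl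
          intro z hz
          rw [if_neg (Finset.mem_filter.1 hz).2]
      _ ≤ ∑ z ∈ 𝓓n.powerset ×ˢ 𝓞n, x ^ z.1.card * x := by
          apply Finset.sum_le_sum_of_subset_of_nonneg hsubB
          intro z _ _
          positivity
      _ = (1 + x) ^ 𝓓n.card * (𝓞n.card * x) := by
          rw [Finset.sum_product]
          simp only [Finset.sum_const, nsmul_eq_mul]
          rw [← Finset.mul_sum, ← Finset.sum_mul, powerset_sum_pow]
          ring
  linarith [hA, hB]

lemma exp_sub_one_le_mul_exp (t : ℝ) : Real.exp t - 1 ≤ t * Real.exp t := by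
  have h := Real.add_one_le_exp (-t)
  rw [Real.exp_neg] at h
  have h2 := mul_le_mul_of_nonneg_right h (Real.exp_pos t).le
  rw [inv_mul_cancel₀ (Real.exp_pos t).ne'] at h2
  nlinarith [h2]

set_option maxHeartbeats 1000000 in
/-- Hybrid extension of the threshold bound, asymptotic form: with a disjoint
sector `𝓓ₙ` (pairwise disjoint, and disjoint from all members of the overlapping
sector `𝓞ₙ`), all members of `𝓓ₙ ∪ 𝓞ₙ` of cardinality at least `K·n^α`, and
`log(1 + |𝓞ₙ|)/n^α → 0`, there is a `c > 0` such that eventually the probability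
that some combined logical support `(⋃_{L∈S} L) ∪ O` (with `S ⊆ 𝓓ₙ`,
`O ∈ 𝓞ₙ ∪ {∅}`, not both empty) has at least half of its support in error is at
most `exp(−c·n^α)`. -/
theorem hybrid_threshold_bound (K α p : ℝ)
    (hK : 0 < K) (hα0 : 0 < α) (hα1 : α ≤ 1) (hp0 : 0 ≤ p) (hp : p < 1 / 2)
    (𝓓 𝓞 : (n : ℕ) → Finset (Finset (Fin n)))
    (hdisjD : ∀ n : ℕ, ((𝓓 n : Set (Finset (Fin n)))).Pairwise fun A B => Disjoint A B)
    (hDO : ∀ n : ℕ, ∀ D ∈ 𝓓 n, ∀ O ∈ 𝓞 n, Disjoint D O)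
    (hcard : ∀ n : ℕ, ∀ L ∈ 𝓓 n ∪ 𝓞 n, K * (n : ℝ) ^ α ≤ (L.card : ℝ))
    (hlog : Filter.Tendsto (fun n : ℕ => Real.log (1 + ((𝓞 n).card : ℝ)) / (n : ℝ) ^ α)
      Filter.atTop (nhds 0)) :
    ∃ c > 0, ∀ᶠ n : ℕ in Filter.atTop,
      productBernoulli n p
          {ω | ∃ S ⊆ 𝓓 n, ∃ O ∈ 𝓞 n ∪ {∅}, ¬(S = ∅ ∧ O = ∅) ∧
            (S.biUnion id ∪ O).card ≤ 2 * (errSet ω ∩ (S.biUnion id ∪ O)).card}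
        ≤ ENNReal.ofReal (Real.exp (-c * (n : ℝ) ^ α)) := by
  classical
  set r : ℝ := 2 * Real.sqrt (p * (1 - p)) with hrdef
  have hr0 : 0 ≤ r := by positivity
  have hr1 : r < 1 := by
    have hsq : Real.sqrt (p * (1 - p)) < 1 / 2 := by
      rw [show (1:ℝ)/2 = Real.sqrt ((1/2)^2) by rw [Real.sqrt_sq]; norm_num]
      apply Real.sqrt_lt_sqrt (by nlinarith)
      nlinarith
    linarith
  set b : ℝ := max r (1 / 2) with hbdef
  have hb0 : (0:ℝ) < b := lt_of_lt_of_le (by norm_num) (le_max_right _ _)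
  have hb1 : b < 1 := max_lt hr1 (by norm_num)
  have hrb : r ≤ b := le_max_left _ _
  set L : ℝ := -Real.log b with hLdef
  have hL : 0 < L := by
    have := Real.log_neg hb0 hb1
    simp only [hLdef]
    linarith
  refine ⟨K * L / 2, by positivity, ?_⟩
  set c : ℝ := K * L / 2 with hcdef
  have hc : 0 < c := by positivity
  have F1 : Filter.Tendsto (fun n : ℕ => ((n:ℝ)) ^ α) Filter.atTop Filter.atTop :=
    (tendsto_rpow_atTop hα0).comp tendsto_natCast_atTop_atTop
  have F2 : Filter.Tendsto
      (fun n : ℕ => Real.exp ((c/3) * ((n:ℝ) ^ α)) / ((n:ℝ) ^ α) ^ (1/α))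
      Filter.atTop Filter.atTop :=
    (tendsto_exp_mul_div_rpow_atTop (1/α) (c/3) (by positivity)).comp F1
  have F3 : Filter.Tendsto
      (fun n : ℕ => Real.exp ((2*c) * ((n:ℝ) ^ α)) / ((n:ℝ) ^ α) ^ (1/α))
      Filter.atTop Filter.atTop :=
    (tendsto_exp_mul_div_rpow_atTop (1/α) (2*c) (by positivity)).comp F1
  have F4 : Filter.Tendsto (fun n : ℕ => Real.exp ((c/3) * ((n:ℝ) ^ α)))
      Filter.atTop Filter.atTop :=
    Real.tendsto_exp_atTop.comp (F1.const_mul_atTop (by positivity))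
  have E1 : ∀ᶠ n : ℕ in Filter.atTop, 1 ≤ n := Filter.eventually_ge_atTop 1
  have E2 : ∀ᶠ n : ℕ in Filter.atTop,
      2 ≤ Real.exp ((c/3) * ((n:ℝ) ^ α)) / ((n:ℝ) ^ α) ^ (1/α) :=
    F2.eventually_ge_atTop 2
  have E3 : ∀ᶠ n : ℕ in Filter.atTop,
      1 ≤ Real.exp ((2*c) * ((n:ℝ) ^ α)) / ((n:ℝ) ^ α) ^ (1/α) :=
    F3.eventually_ge_atTop 1
  have E4 : ∀ᶠ n : ℕ in Filter.atTop, 3 ≤ Real.exp ((c/3) * ((n:ℝ) ^ α)) :=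
    F4.eventually_ge_atTop 3
  have E5 : ∀ᶠ n : ℕ in Filter.atTop,
      Real.log (1 + ((𝓞 n).card : ℝ)) / (n : ℝ) ^ α < c / 3 :=
    hlog.eventually_lt_const (by positivity)
  have E6 : ∀ᶠ n : ℕ in Filter.atTop, 1 ≤ K * (n:ℝ) ^ α :=
    (F1.const_mul_atTop hK).eventually_ge_atTop 1
  filter_upwards [E1, E2, E3, E4, E5, E6] with n h1 h2 h3 h4 h5 h6
  have hn0 : (0:ℝ) < (n:ℝ) := by exact_mod_cast h1
  have hnα : (0:ℝ) < (n:ℝ) ^ α := Real.rpow_pos_of_pos hn0 _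
  have hroot : ((n:ℝ) ^ α) ^ (1/α) = (n:ℝ) := by
    rw [← Real.rpow_mul hn0.le, mul_one_div, div_self hα0.ne', Real.rpow_one]
  rw [hroot] at h2 h3
  have hn1 : (1:ℝ) ≤ (n:ℝ) := by exact_mod_cast h1
  have h2' : (n:ℝ) + 1 ≤ Real.exp ((c/3) * (n:ℝ)^α) := by
    rw [le_div_iff₀ hn0] at h2
    linarith
  have h3' : (n:ℝ) ≤ Real.exp ((2*c) * (n:ℝ)^α) := by
    rw [le_div_iff₀ hn0] at h3
    linarith
  have h5' : 1 + ((𝓞 n).card : ℝ) ≤ Real.exp ((c/3) * (n:ℝ)^α) := by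
    have hlog' : Real.log (1 + ((𝓞 n).card : ℝ)) < c/3 * (n:ℝ)^α := by
      rw [div_lt_iff₀ hnα] at h5
      linarith
    calc 1 + ((𝓞 n).card : ℝ) = Real.exp (Real.log (1 + ((𝓞 n).card : ℝ))) := by
          rw [Real.exp_log (by positivity)]
      _ ≤ Real.exp ((c/3) * (n:ℝ)^α) := Real.exp_le_exp.2 (by linarith)
  have HU := union_bound p (K * (n:ℝ)^α) b hp0 hp (by positivity) hb0 hb1.le hrb
    (𝓓 n) (𝓞 n) (hdisjD n) (hDO n) (hcard n)
  refine HU.trans (ENNReal.ofReal_le_ofReal ?_)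
  set D : ℕ := (𝓓 n).card with hD
  set M : ℕ := (𝓞 n).card with hM
  set x : ℝ := b ^ (K * (n:ℝ)^α) with hxdef
  have hx0 : 0 ≤ x := (Real.rpow_pos_of_pos hb0 _).le
  have hlogb : Real.log b = -L := by rw [hLdef]; ring
  have hxe : x = Real.exp (-(2*c) * (n:ℝ)^α) := by
    rw [hxdef, Real.rpow_def_of_pos hb0, hlogb]
    congr 1
    rw [hcdef]
    ring
  -- bound on D
  have hDsum : (D:ℝ) * (K * (n:ℝ)^α) ≤ (n:ℝ) := by
    have hsum : ((𝓓 n).biUnion id).card = ∑ A ∈ 𝓓 n, A.card :=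
      Finset.card_biUnion (fun A hA B hB hAB => hdisjD n hA hB hAB)
    have hle : ((𝓓 n).biUnion id).card ≤ n := by
      calc ((𝓓 n).biUnion id).card ≤ (Finset.univ : Finset (Fin n)).card :=
            Finset.card_le_univ _
        _ = n := Finset.card_univ.trans (Fintype.card_fin n)
    have : (D:ℝ) * (K * (n:ℝ)^α) ≤ ∑ A ∈ 𝓓 n, (A.card : ℝ) := by
      calc (D:ℝ) * (K * (n:ℝ)^α) = ∑ _A ∈ 𝓓 n, K * (n:ℝ)^α := by
            rw [Finset.sum_const, nsmul_eq_mul, hD]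
        _ ≤ ∑ A ∈ 𝓓 n, (A.card : ℝ) :=
            Finset.sum_le_sum fun A hA => hcard n A (Finset.mem_union_left _ hA)
    calc (D:ℝ) * (K * (n:ℝ)^α) ≤ ∑ A ∈ 𝓓 n, (A.card : ℝ) := this
      _ = (((𝓓 n).biUnion id).card : ℝ) := by rw [hsum]; push_cast; ring
      _ ≤ (n:ℝ) := by exact_mod_cast hle
  have hDn : (D:ℝ) ≤ (n:ℝ) := by
    have hh : (D:ℝ) * 1 ≤ (D:ℝ) * (K * (n:ℝ)^α) :=
      mul_le_mul_of_nonneg_left h6 (Nat.cast_nonneg D)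
    rw [mul_one] at hh
    linarith
  have hx1n : (n:ℝ) * x ≤ 1 := by
    calc (n:ℝ) * x = (n:ℝ) * Real.exp (-(2*c) * (n:ℝ)^α) := by rw [hxe]
      _ ≤ Real.exp ((2*c) * (n:ℝ)^α) * Real.exp (-(2*c) * (n:ℝ)^α) :=
          mul_le_mul_of_nonneg_right h3' (Real.exp_pos _).le
      _ = 1 := by
          rw [← Real.exp_add, show (2*c) * (n:ℝ)^α + -(2*c) * (n:ℝ)^α = 0 by ring,
            Real.exp_zero]
  have hDx : (D:ℝ) * x ≤ 1 := by
    have := mul_le_mul_of_nonneg_right hDn hx0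
    linarith
  -- bound the polynomial part by exponentials
  have h1x : (1:ℝ) + x ≤ Real.exp x := by
    have := Real.add_one_le_exp x
    linarith
  have hpow : ((1:ℝ) + x) ^ D ≤ Real.exp ((D:ℝ) * x) := by
    calc ((1:ℝ) + x) ^ D ≤ (Real.exp x) ^ D := pow_le_pow_left₀ (by linarith) h1x D
      _ = Real.exp ((D:ℝ) * x) := (Real.exp_nat_mul x D).symm
  have hexp3 : Real.exp ((D:ℝ) * x) ≤ 3 := by
    calc Real.exp ((D:ℝ) * x) ≤ Real.exp 1 := Real.exp_le_exp.2 hDx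
      _ ≤ 3 := by
          have := Real.exp_one_lt_d9
          linarith
  have hDx0 : (0:ℝ) ≤ (D:ℝ) * x := mul_nonneg (Nat.cast_nonneg D) hx0
  have hgeom : Real.exp ((D:ℝ) * x) - 1 ≤ (D:ℝ) * x * Real.exp ((D:ℝ) * x) :=
    exp_sub_one_le_mul_exp ((D:ℝ) * x)
  have hpow1 : ((1:ℝ) + x) ^ D - 1 ≤ 3 * ((D:ℝ) * x) := by
    have hh : (D:ℝ) * x * Real.exp ((D:ℝ) * x) ≤ (D:ℝ) * x * 3 :=
      mul_le_mul_of_nonneg_left hexp3 hDx0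
    linarith
  have hpowpos : (0:ℝ) ≤ ((1:ℝ) + x) ^ D := pow_nonneg (by linarith) D
  have hMx0 : (0:ℝ) ≤ (M:ℝ) * x := mul_nonneg (Nat.cast_nonneg M) hx0
  have hpow2 : ((1:ℝ) + x) ^ D * ((M:ℝ) * x) ≤ 3 * ((M:ℝ) * x) :=
    mul_le_mul_of_nonneg_right (hpow.trans hexp3) hMx0
  -- final exponential comparison
  set E : ℝ := Real.exp ((c/3) * (n:ℝ)^α) with hE
  have hE0 : (0:ℝ) < E := Real.exp_pos _
  have hprod : 3 * ((n:ℝ) + 1) * (1 + (M:ℝ)) ≤ E * E * E := by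
    have hM0 : (0:ℝ) ≤ (M:ℝ) := Nat.cast_nonneg M
    have e1 : (3:ℝ) ≤ E := h4
    have e2 : (n:ℝ) + 1 ≤ E := h2'
    have e3 : 1 + (M:ℝ) ≤ E := h5'
    have p1 : (0:ℝ) ≤ (n:ℝ) + 1 := by linarith
    have p2 : (0:ℝ) ≤ 1 + (M:ℝ) := by linarith
    calc 3 * ((n:ℝ) + 1) * (1 + (M:ℝ)) ≤ E * E * (1 + (M:ℝ)) :=
          mul_le_mul_of_nonneg_right
            (mul_le_mul e1 e2 p1 (by linarith)) p2
      _ ≤ E * E * E :=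
          mul_le_mul_of_nonneg_left e3 (mul_nonneg hE0.le hE0.le)
  have hEEE : E * E * E = Real.exp (c * (n:ℝ)^α) := by
    rw [hE, ← Real.exp_add, ← Real.exp_add]
    congr 1
    ring
  have hDM : 3 * ((D:ℝ) + (M:ℝ)) ≤ Real.exp (c * (n:ℝ)^α) := by
    rw [← hEEE]
    have hM0 : (0:ℝ) ≤ (M:ℝ) := Nat.cast_nonneg M
    have t1 : (M:ℝ) ≤ ((n:ℝ) + 1) * (M:ℝ) := le_mul_of_one_le_left hM0 (by linarith)
    have hexpand : 3 * ((n:ℝ) + 1) * (1 + (M:ℝ))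
        = 3 * ((n:ℝ) + 1) + 3 * (((n:ℝ) + 1) * (M:ℝ)) := by ring
    linarith
  have hfinal : 3 * ((D:ℝ) + (M:ℝ)) * x ≤ Real.exp (-c * (n:ℝ)^α) := by
    calc 3 * ((D:ℝ) + (M:ℝ)) * x ≤ Real.exp (c * (n:ℝ)^α) * x :=
          mul_le_mul_of_nonneg_right hDM hx0
      _ = Real.exp (-c * (n:ℝ)^α) := by
          rw [hxe, ← Real.exp_add]
          congr 1
          ring
  calc ((1:ℝ) + x) ^ D - 1 + ((1:ℝ) + x) ^ D * ((M:ℝ) * x)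
      ≤ 3 * ((D:ℝ) * x) + 3 * ((M:ℝ) * x) := by linarith
    _ = 3 * ((D:ℝ) + (M:ℝ)) * x := by ring
    _ ≤ Real.exp (-c * (n:ℝ)^α) := hfinal
end
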